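/- Let e = 2^r − 1. For an m×n array H of e×e circulant permutation matrices and zero matrices over GF(2) that is the e-fold dispersion of a base matrix B over GF(2^r), rank(H) = Σ_{t=0}^{e−1} rank(B^{∘t}), where B^{∘t} is the t-th Hadamard power of B with the convention b^0 = 1 for b ≠ 0 and 0^0 = 0. -/

import Mathlib

open Matrix

private lemma li_map_fieldHom {K L : Type*} [Field K] [Field L] (f : K →+* L)
    {m : Type*} [Fintype m] [DecidableEq m] {k : ℕ} {w : Fin k → (m → K)}
    (hw : LinearIndependent K w) : LinearIndependent L (fun i => f ∘ (w i)) := by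
  set W : Matrix m (Fin k) K := Matrix.of fun x i => w i x with hW
  have hker : LinearMap.ker W.mulVecLin = ⊥ := by
    rw [LinearMap.ker_eq_bot']
    intro c hc
    have := (Fintype.linearIndependent_iff.mp hw) c ?_
    · exact funext this
    · ext x
      have := congrFun hc x
      simpa [Matrix.mulVecLin, Matrix.mulVec, dotProduct, hW, mul_comm] using this
  obtain ⟨h, hh⟩ := W.mulVecLin.exists_leftInverse_of_injective hker
  set X : Matrix (Fin k) m K := LinearMap.toMatrix' h with hX
  have hXW : X * W = 1 := by
    have hWl : W.mulVecLin = Matrix.toLin' W := rfl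
    have h2 : X * LinearMap.toMatrix' (Matrix.toLin' W)
        = LinearMap.toMatrix' (h.comp (Matrix.toLin' W)) := by
      rw [hX, ← LinearMap.toMatrix'_comp]
    rw [LinearMap.toMatrix'_toLin'] at h2
    rw [h2]
    have h3 : h ∘ₗ Matrix.toLin' W = LinearMap.id := hWl ▸ hh
    rw [h3, LinearMap.toMatrix'_id]
  rw [Fintype.linearIndependent_iff]
  intro g hg
  have hgv : (W.map f).mulVec g = 0 := by
    ext x
    have := congrFun hg x
    simpa [Matrix.mulVec, dotProduct, hW, mul_comm] using this
  have : g = 0 := by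
    calc g = (1 : Matrix (Fin k) (Fin k) L).mulVec g := by simp
    _ = ((X * W).map f).mulVec g := by
          rw [hXW, Matrix.map_one f f.map_zero f.map_one]
    _ = ((X.map f) * (W.map f)).mulVec g := by rw [Matrix.map_mul]
    _ = (X.map f).mulVec ((W.map f).mulVec g) := by rw [← Matrix.mulVec_mulVec]
    _ = 0 := by rw [hgv, Matrix.mulVec_zero]
  intro i; exact congrFun this i

private lemma rank_map_fieldHom {K L : Type*} [Field K] [Field L] (f : K →+* L)
    {m n : Type*} [Fintype m] [Fintype n] [DecidableEq m] [DecidableEq n]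
    (A : Matrix m n K) : (A.map f).rank = A.rank := by
  classical
  set V := LinearMap.range A.mulVecLin with hV
  set r := Module.finrank K V with hr
  have hrA : A.rank = r := rfl
  let b : Module.Basis (Fin r) K V := Module.finBasis K V
  have hbli : LinearIndependent K (fun i => ((b i : m → K))) :=
    b.linearIndependent.map' V.subtype V.ker_subtype
  have hcol : ∀ j, (fun i => A i j) ∈ V := fun j =>
    ⟨Pi.single j 1, by ext i; simp [Matrix.mulVecLin, Matrix.mulVec_single]⟩
  refine le_antisymm ?le ?ge
  case le =>
    set C : Matrix m (Fin r) K := Matrix.of fun i k => (b k : m → K) i with hC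
    set E : Matrix (Fin r) n K := Matrix.of fun k j => b.repr ⟨fun i => A i j, hcol j⟩ k with hE
    have hA : A = C * E := by
      ext i j
      have h1 := b.sum_repr ⟨fun i => A i j, hcol j⟩
      have h2 := congrArg (fun v : V => (v : m → K) i) h1
      simp only [Submodule.coe_sum, Submodule.coe_smul] at h2
      simp only [Matrix.mul_apply, hC, hE, Matrix.of_apply]
      rw [← h2]
      simp [Finset.sum_apply, mul_comm]
    calc (A.map f).rank = ((C.map f) * (E.map f)).rank := by rw [hA, Matrix.map_mul]
    _ ≤ (C.map f).rank := Matrix.rank_mul_le_left _ _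
    _ ≤ Fintype.card (Fin r) := Matrix.rank_le_card_width _
    _ = r := Fintype.card_fin r
  case ge =>
    rw [hrA]
    have hpre : ∀ k : Fin r, ∃ u : n → K, A.mulVec u = (b k : m → K) := fun k => (b k).2
    choose u hu using hpre
    set w : Fin r → (m → L) := fun k => f ∘ (b k : m → K) with hw
    have hli : LinearIndependent L w := li_map_fieldHom f hbli
    have hmem : ∀ k, w k ∈ LinearMap.range (A.map f).mulVecLin := by
      intro k
      refine ⟨f ∘ u k, ?_⟩
      ext i
      have := congrFun (hu k) i
      simp only [Matrix.mulVecLin_apply, Matrix.mulVec, dotProduct, Matrix.map_apply,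
        Function.comp_apply, hw] at this ⊢
      rw [← this, map_sum]
      simp [_root_.map_mul]
    calc r = Fintype.card (Fin r) := (Fintype.card_fin r).symm
    _ = Module.finrank L (Submodule.span L (Set.range w)) := (finrank_span_eq_card hli).symm
    _ ≤ Module.finrank L (LinearMap.range (A.map f).mulVecLin) := by
        apply Submodule.finrank_mono
        rw [Submodule.span_le]
        rintro x ⟨k, rfl⟩
        exact hmem k
    _ = (A.map f).rank := rfl

private def curryLE (R : Type*) [Semiring R] (m o : Type*) :
    ((m × o) → R) ≃ₗ[R] (o → m → R) where
  toFun g k x := g (x, k)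
  map_add' _ _ := rfl
  map_smul' _ _ := rfl
  invFun h p := h p.2 p.1
  left_inv _ := rfl
  right_inv _ := rfl

private def piSubmoduleEquiv {R : Type*} [Semiring R] {ι : Type*} {φ : ι → Type*}
    [∀ i, AddCommMonoid (φ i)] [∀ i, Module R (φ i)] (p : ∀ i, Submodule R (φ i)) :
    (Submodule.pi Set.univ p) ≃ₗ[R] ((i : ι) → p i) where
  toFun x i := ⟨x.1 i, (Submodule.mem_pi.mp x.2) i (Set.mem_univ i)⟩
  map_add' _ _ := rfl
  map_smul' _ _ := rfl
  invFun v := ⟨fun i => v i, Submodule.mem_pi.mpr fun i _ => (v i).2⟩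
  left_inv _ := rfl
  right_inv _ := rfl

private lemma rank_blockDiagonal' {L : Type*} [Field L] {m n o : Type*} [Fintype m] [Fintype n]
    [Fintype o] [DecidableEq o] [DecidableEq m] (M : o → Matrix m n L) :
    (Matrix.blockDiagonal M).rank = ∑ k, (M k).rank := by
  classical
  set p : ∀ _ : o, Submodule L (m → L) := fun k => LinearMap.range (M k).mulVecLin with hp
  set T := (Matrix.blockDiagonal M).mulVecLin with hT
  have key : Submodule.map (curryLE L m o).toLinearMap (LinearMap.range T) =
      Submodule.pi Set.univ p := by
    rw [← LinearMap.range_comp]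
    ext x
    constructor
    · rintro ⟨v, rfl⟩
      rw [Submodule.mem_pi]
      intro k _
      refine ⟨fun j => v (j, k), ?_⟩
      ext y
      simp only [Matrix.mulVecLin_apply, LinearMap.comp_apply, hT]
      show _ = ((Matrix.blockDiagonal M).mulVec v) (y, k)
      simp [Matrix.mulVec, dotProduct, Fintype.sum_prod_type,
        Matrix.blockDiagonal_apply, ite_mul]
    · intro hx
      rw [Submodule.mem_pi] at hx
      choose u hu using fun k => hx k (Set.mem_univ k)
      refine ⟨fun q => u q.2 q.1, ?_⟩
      ext k y
      have := congrFun (hu k) y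
      simp only [Matrix.mulVecLin_apply] at this
      simp only [Matrix.mulVecLin_apply, LinearMap.comp_apply, hT]
      show ((Matrix.blockDiagonal M).mulVec _) (y, k) = x k y
      rw [← this]
      simp [Matrix.mulVec, dotProduct, Fintype.sum_prod_type,
        Matrix.blockDiagonal_apply, ite_mul]
  have h1 : (Matrix.blockDiagonal M).rank
      = Module.finrank L (Submodule.pi Set.univ p) := by
    rw [Matrix.rank, ← key, LinearEquiv.finrank_map_eq]
  rw [h1, (piSubmoduleEquiv p).finrank_eq, Module.finrank_pi_fintype]
  rfl

private lemma blockVandermonde_det_isUnit {e m : ℕ} {F : Type*} [Field F] [DecidableEq F] (α : F)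
    (hα : orderOf α = e) :
    IsUnit (Matrix.det (Matrix.of (fun (p q : Fin m × Fin e) =>
      if p.1 = q.1 then α ^ ((p.2 : ℕ) * (q.2 : ℕ)) else (0:F)))) := by
  classical
  set V : Matrix (Fin e) (Fin e) F := Matrix.vandermonde (fun s : Fin e => α ^ (s : ℕ)) with hV
  have hsub : (Matrix.of (fun (p q : Fin m × Fin e) =>
      if p.1 = q.1 then α ^ ((p.2 : ℕ) * (q.2 : ℕ)) else (0:F))) =
      (Matrix.blockDiagonal (fun _ : Fin m => V)).submatrix
        (Equiv.prodComm (Fin m) (Fin e)) (Equiv.prodComm (Fin m) (Fin e)) := by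
    ext ⟨i, s⟩ ⟨j, t⟩
    simp [Matrix.blockDiagonal_apply, hV, Matrix.vandermonde, pow_mul, eq_comm]
  rw [hsub, Matrix.det_submatrix_equiv_self, Matrix.det_blockDiagonal]
  have hdet : V.det ≠ 0 := by
    rw [hV, Matrix.det_vandermonde_ne_zero_iff]
    intro s t hst
    have := pow_injOn_Iio_orderOf (x := α) (by rw [hα]; exact s.isLt)
      (by rw [hα]; exact t.isLt) hst
    exact Fin.ext this
  exact IsUnit.mk0 _ (Finset.prod_ne_zero_iff.mpr fun _ _ => hdet)

/-- The GF(2)-rank of the CPM/ZM dispersion of a base matrix `B` over GF(2^r)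
equals the sum of the GF(2^r)-ranks of the Hadamard powers `B^{∘t}`,
`0 ≤ t < e`, with the convention `0^0 = 0`. -/
theorem stmt12 {r e m n : ℕ} (he : e = 2 ^ r - 1) (he0 : 0 < e)
    {F : Type*} [Field F] [Fintype F] [DecidableEq F] [CharP F 2]
    (hF : Fintype.card F = 2 ^ r)
    (α : F) (hα : orderOf α = e)
    (B : Matrix (Fin m) (Fin n) F)
    (H : Matrix (Fin m × Fin e) (Fin n × Fin e) (ZMod 2))
    (hH : ∀ p q, H p q = if α ^ ((q.2 - p.2 : Fin e) : ℕ) = B p.1 q.1 then 1 else 0) :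
    H.rank = ∑ t ∈ Finset.range e,
      (Matrix.of fun i j => if B i j = 0 then (0 : F) else (B i j) ^ t).rank := by
  classical
  haveI : Fact (Nat.Prime 2) := ⟨Nat.prime_two⟩
  haveI : NeZero e := ⟨he0.ne'⟩
  set f : ZMod 2 →+* F := ZMod.castHom (dvd_refl 2) F with hf
  -- basic facts
  have hαe : α ^ e = 1 := by rw [← hα]; exact pow_orderOf_eq_one α
  have hα0 : α ≠ 0 := by
    intro h
    rw [h, zero_pow he0.ne'] at hαe
    exact zero_ne_one hαe
  have heF : (e : F) = 1 := by
    have hr : 1 ≤ r := by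
      by_contra h
      interval_cases r
      · simp [he] at he0
    have h2 : (e : ℕ) + 1 = 2 ^ r := by
      have : 1 ≤ 2 ^ r := Nat.one_le_two_pow
      omega
    have hcast : ((e : F) + 1) = ((2:F)) ^ r := by
      have := congrArg (Nat.cast : ℕ → F) h2
      push_cast at this
      simpa using this
    have h20 : (2 : F) = 0 := by
      have := CharP.cast_eq_zero F 2
      simpa using this
    rw [h20, zero_pow (by omega)] at hcast
    have h11 : (1 : F) + 1 = 0 := by
      have := CharP.cast_eq_zero F 2
      push_cast at this
      linear_combination this
    linear_combination hcast - h11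
  have hshift : ∀ s t : Fin e, α ^ (((t - s : Fin e) : ℕ)) * α ^ (s : ℕ) = α ^ (t : ℕ) := by
    intro s t
    rw [← pow_add]
    have h1 : ((t - s) + s : Fin e) = t := sub_add_cancel t s
    have h2 := congrArg Fin.val h1
    rw [Fin.val_add] at h2
    calc α ^ (((t - s : Fin e) : ℕ) + (s:ℕ))
        = α ^ ((((t - s : Fin e) : ℕ) + (s:ℕ)) % orderOf α) := (pow_mod_orderOf α _).symm
      _ = α ^ (t : ℕ) := by rw [hα, h2]
  -- the Hadamard powers, block diagonal matrix, and Vandermonde factors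
  set Bt : Fin e → Matrix (Fin m) (Fin n) F :=
    fun u => Matrix.of fun i j => if B i j = 0 then (0:F) else (B i j) ^ (u : ℕ) with hBt
  set D := Matrix.blockDiagonal Bt with hD
  set Lm : Matrix (Fin m × Fin e) (Fin m × Fin e) F :=
    Matrix.of (fun p q => if p.1 = q.1 then α ^ ((p.2 : ℕ) * (q.2 : ℕ)) else (0:F)) with hLm
  set Qm : Matrix (Fin n × Fin e) (Fin n × Fin e) F :=
    Matrix.of (fun p q => if p.1 = q.1 then (α⁻¹) ^ ((p.2 : ℕ) * (q.2 : ℕ)) else (0:F)) with hQm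
  have hLdet : IsUnit Lm.det := blockVandermonde_det_isUnit α hα
  have hQdet : IsUnit Qm.det := by
    refine blockVandermonde_det_isUnit α⁻¹ ?_
    have hu : orderOf ((Units.mk0 α hα0 : Fˣ) : F) = orderOf (Units.mk0 α hα0) := orderOf_units
    have hu2 : orderOf (((Units.mk0 α hα0)⁻¹ : Fˣ) : F) = orderOf ((Units.mk0 α hα0)⁻¹) :=
      orderOf_units
    rw [show (α⁻¹ : F) = (((Units.mk0 α hα0)⁻¹ : Fˣ) : F) from rfl, hu2, orderOf_inv,
      ← hu, Units.val_mk0, hα]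
  -- the key factorization
  have hfact : H.map f = Lm * (D * Qm) := by
    ext ⟨i, s⟩ ⟨j, t⟩
    have hDQ : ∀ (i' : Fin m) (u : Fin e),
        (D * Qm) (i', u) (j, t) = Bt u i' j * (α⁻¹) ^ ((u : ℕ) * (t : ℕ)) := by
      intro i' u
      rw [Matrix.mul_apply, Fintype.sum_prod_type]
      simp [hD, hQm, Matrix.blockDiagonal_apply, ite_mul, mul_ite]
    have hrhs : (Lm * (D * Qm)) (i, s) (j, t)
        = ∑ u : Fin e, α ^ ((s : ℕ) * (u : ℕ)) * (Bt u i j * (α⁻¹) ^ ((u : ℕ) * (t : ℕ))) := by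
      rw [Matrix.mul_apply, Fintype.sum_prod_type]
      simp only [hDQ, hLm, Matrix.of_apply, ite_mul, zero_mul]
      simp
    rw [hrhs]
    have hlhs : (H.map f) (i, s) (j, t)
        = if α ^ ((t - s : Fin e) : ℕ) = B i j then (1:F) else 0 := by
      rw [Matrix.map_apply, hH]
      simp only [apply_ite f, _root_.map_one, _root_.map_zero]
    rw [hlhs]
    by_cases hB : B i j = 0
    · have : ∀ u : Fin e, Bt u i j = 0 := fun u => by simp [hBt, hB]
      simp only [this, mul_zero, zero_mul, Finset.sum_const_zero]
      rw [if_neg]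
      intro hc
      exact hα0 (pow_eq_zero_iff'.mp (hc.trans hB) |>.1)
    · -- geometric sum
      set γ : F := α ^ (s : ℕ) * B i j * (α⁻¹) ^ (t : ℕ) with hγ
      have hγe : γ ^ e = 1 := by
        have hBe : (B i j) ^ e = 1 := by
          rw [he, ← hF]
          exact FiniteField.pow_card_sub_one_eq_one _ hB
        have hαie : (α⁻¹) ^ e = 1 := by
          rw [inv_pow, hαe, inv_one]
        rw [hγ, mul_pow, mul_pow, ← pow_mul, mul_comm (s:ℕ) e, pow_mul, hαe, one_pow,
          ← pow_mul, mul_comm (t:ℕ) e, pow_mul, hαie, one_pow, one_mul, hBe, one_mul]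
      have hterm : ∀ u : Fin e,
          α ^ ((s : ℕ) * (u : ℕ)) * (Bt u i j * (α⁻¹) ^ ((u : ℕ) * (t : ℕ))) = γ ^ (u : ℕ) := by
        intro u
        have h1 : α ^ ((s : ℕ) * (u : ℕ)) = (α ^ (s:ℕ)) ^ (u:ℕ) := pow_mul α _ _
        have h2 : (α⁻¹) ^ ((u : ℕ) * (t : ℕ)) = ((α⁻¹) ^ (t:ℕ)) ^ (u:ℕ) := by
          rw [mul_comm, pow_mul]
        rw [h1, h2, hγ]
        simp only [hBt, Matrix.of_apply, if_neg hB]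
        rw [mul_pow, mul_pow]
        ring
      rw [Finset.sum_congr rfl (fun u _ => hterm u)]
      have hsum : ∑ u : Fin e, γ ^ (u : ℕ) = ∑ x ∈ Finset.range e, γ ^ x :=
        Fin.sum_univ_eq_sum_range (fun x => γ ^ x) e
      rw [hsum]
      have hcond : (α ^ ((t - s : Fin e) : ℕ) = B i j) ↔ γ = 1 := by
        constructor
        · intro hc
          rw [hγ, ← hc, inv_pow, mul_comm (α ^ (s:ℕ)), hshift s t]
          exact mul_inv_cancel₀ (pow_ne_zero _ hα0)
        · intro hc
          have h2 : α ^ (s:ℕ) * B i j * (α ^ (t:ℕ))⁻¹ = 1 := by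
            rw [← inv_pow]; exact hc
          have h1 : B i j * α ^ (s:ℕ) = α ^ (t:ℕ) := by
            field_simp at h2
            linear_combination h2
          exact mul_right_cancel₀ (pow_ne_zero _ hα0) ((hshift s t).trans h1.symm)
      by_cases hγ1 : γ = 1
      · rw [if_pos (hcond.mpr hγ1), hγ1]
        simp [heF]
      · rw [if_neg (fun hc => hγ1 (hcond.mp hc))]
        rw [geom_sum_eq hγ1, hγe]
        simp
  -- put everything together
  have hrank : H.rank = (H.map f).rank := (rank_map_fieldHom f H).symm
  rw [hrank, hfact, Matrix.rank_mul_eq_right_of_isUnit_det Lm _ hLdet,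
    Matrix.rank_mul_eq_left_of_isUnit_det Qm D hQdet, hD, rank_blockDiagonal' Bt]
  exact Fin.sum_univ_eq_sum_range
    (fun x => (Matrix.of fun i j => if B i j = 0 then (0:F) else (B i j) ^ x).rank) e
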